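/- Under lexicographic utilities, an assignment p is Pareto optimal if and only if the exchange graph G(p) contains no cycle containing at least one strict-preference edge. -/

import Mathlib

open Finset

def IsPartition {N O : Type*} (p : N → Finset O) : Prop :=
  ∀ o : O, ∃! i : N, o ∈ p i

def Dominates {N O : Type*} [Fintype N] (u : N → O → ℝ) (q p : N → Finset O) : Prop :=
  (∀ i, ∑ o ∈ p i, u i o ≤ ∑ o ∈ q i, u i o) ∧ ∃ i, ∑ o ∈ p i, u i o < ∑ o ∈ q i, u i o

def ParetoOptimal {N O : Type*} [Fintype N] (u : N → O → ℝ) (p : N → Finset O) : Prop :=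
  ¬ ∃ q : N → Finset O, IsPartition q ∧ Dominates u q p

def nextFin {k : ℕ} (hk : 0 < k) (l : Fin k) : Fin k := ⟨(l.1 + 1) % k, Nat.mod_lt _ hk⟩

def Lexicographic {N O : Type*} [Fintype O] (u : N → O → ℝ) : Prop :=
  ∀ i o, (∑ o' ∈ univ.filter (fun o' => u i o' < u i o), u i o') < u i o

lemma nextFin_injective {k : ℕ} (hk : 0 < k) : Function.Injective (nextFin hk) := by
  intro a b h
  have h' : (a.1 + 1) % k = (b.1 + 1) % k := congrArg Fin.val h
  have key : ∀ x : Fin k, ((x.1 + 1) % k + (k - 1)) % k = x.1 := by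
    intro x
    rw [Nat.mod_add_mod]
    have : x.1 + 1 + (k - 1) = x.1 + k := by omega
    rw [this, Nat.add_mod_right, Nat.mod_eq_of_lt x.2]
  have := key a
  rw [h', key b] at this
  exact Fin.ext this.symm

lemma nextFin_surjective {k : ℕ} (hk : 0 < k) : Function.Surjective (nextFin hk) :=
  Finite.surjective_of_injective (nextFin_injective hk)

lemma cycle_improvement {N O : Type*} [Fintype N] [Fintype O]
    (u : N → O → ℝ)
    (p : N → Finset O) (hp : IsPartition p)
    {k : ℕ} (hk : 2 ≤ k) (c : Fin k → O) (hcinj : Function.Injective c)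
    (hweak : ∀ l i, c l ∈ p i → u i (c l) ≤ u i (c (nextFin (Nat.lt_of_lt_of_le Nat.two_pos hk) l)))
    (hstrict : ∃ l i, c l ∈ p i ∧ u i (c l) < u i (c (nextFin (Nat.lt_of_lt_of_le Nat.two_pos hk) l))) :
    ∃ q, IsPartition q ∧ Dominates u q p := by
  classical
  have hk0 : 0 < k := by omega
  set nxt := nextFin hk0 with hnxt
  set C : Finset O := image c univ with hC
  set L : N → Finset (Fin k) := fun i => univ.filter (fun l => c l ∈ p i) with hL
  set q : N → Finset O := fun i => (p i \ C) ∪ (L i).image (fun l => c (nxt l)) with hq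
  have himg_subset : ∀ i, (L i).image (fun l => c (nxt l)) ⊆ C := by
    intro i x hx
    obtain ⟨l, _, rfl⟩ := mem_image.mp hx
    exact mem_image.mpr ⟨nxt l, mem_univ _, rfl⟩
  have hdisj : ∀ i, Disjoint (p i \ C) ((L i).image (fun l => c (nxt l))) := by
    intro i
    exact disjoint_left.mpr (fun x hx hx' => (mem_sdiff.mp hx).2 (himg_subset i hx'))
  have hmem_q : ∀ i o, o ∈ q i ↔ (o ∈ p i ∧ o ∉ C) ∨ ∃ l, c l ∈ p i ∧ c (nxt l) = o := by
    intro i o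
    rw [hq]
    simp only [mem_union, mem_sdiff, mem_image, hL, mem_filter, mem_univ, true_and]
  have hqpart : IsPartition q := by
    intro o
    by_cases ho : o ∈ C
    · obtain ⟨j, -, rfl⟩ := mem_image.mp ho
      obtain ⟨l, rfl⟩ := nextFin_surjective hk0 j
      obtain ⟨i0, hi0, hi0u⟩ := hp (c l)
      refine ⟨i0, (hmem_q i0 _).mpr (Or.inr ⟨l, hi0, rfl⟩), ?_⟩
      intro i hi
      rcases (hmem_q i _).mp hi with ⟨-, hnc⟩ | ⟨l', hl', he⟩
      · exact absurd (mem_image.mpr ⟨nxt l, mem_univ _, rfl⟩) hnc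
      · have : l' = l := nextFin_injective hk0 (hcinj he)
        exact hi0u i (this ▸ hl')
    · obtain ⟨i0, hi0, hi0u⟩ := hp o
      refine ⟨i0, (hmem_q i0 o).mpr (Or.inl ⟨hi0, ho⟩), ?_⟩
      intro i hi
      rcases (hmem_q i o).mp hi with ⟨hpi, -⟩ | ⟨l', -, he⟩
      · exact hi0u i hpi
      · exact absurd (he ▸ mem_image.mpr ⟨nxt l', mem_univ _, rfl⟩ : o ∈ C) ho
  have hinjOn : ∀ i, ∀ x ∈ L i, ∀ y ∈ L i, c (nxt x) = c (nxt y) → x = y :=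
    fun i x _ y _ h => nextFin_injective hk0 (hcinj h)
  have hsum_q : ∀ i, ∑ o ∈ q i, u i o
      = ∑ o ∈ p i \ C, u i o + ∑ l ∈ L i, u i (c (nxt l)) := by
    intro i
    rw [hq]
    rw [sum_union (hdisj i), sum_image (hinjOn i)]
  have hsum_p : ∀ i, ∑ o ∈ p i, u i o
      = ∑ o ∈ p i \ C, u i o + ∑ l ∈ L i, u i (c l) := by
    intro i
    have h1 : p i \ C = (p i).filter (fun o => o ∉ C) := by
      rw [sdiff_eq_filter]
    have h2 : (p i).filter (fun o => o ∈ C) = (L i).image c := by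
      rw [hL]
      ext x
      simp only [mem_filter, mem_image, mem_univ, true_and, hC]
      constructor
      · rintro ⟨hx, l, rfl⟩
        exact ⟨l, hx, rfl⟩
      · rintro ⟨l, hl, rfl⟩
        exact ⟨hl, l, rfl⟩
    have := sum_filter_add_sum_filter_not (p i) (fun o => o ∈ C) (u i)
    rw [← this, h1, h2, sum_image (fun x _ y _ h => hcinj h)]
    ring
  have hle : ∀ i, ∑ o ∈ p i, u i o ≤ ∑ o ∈ q i, u i o := by
    intro i
    rw [hsum_p, hsum_q]
    refine add_le_add_right (sum_le_sum ?_) _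
    intro l hl
    exact hweak l i ((mem_filter.mp hl).2)
  refine ⟨q, hqpart, hle, ?_⟩
  obtain ⟨l0, i0, hl0, hs⟩ := hstrict
  refine ⟨i0, ?_⟩
  rw [hsum_p, hsum_q]
  refine add_lt_add_right (sum_lt_sum (fun l hl => hweak l i0 ((mem_filter.mp hl).2)) ?_) _
  exact ⟨l0, mem_filter.mpr ⟨mem_univ _, hl0⟩, hs⟩

lemma lex_exists_better {N O : Type*} [Fintype O] [DecidableEq O]
    (u : N → O → ℝ) (hpos : ∀ i o, 0 < u i o) (hlex : Lexicographic u)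
    (i : N) (A B : Finset O) (hsum : ∑ o ∈ A, u i o ≤ ∑ o ∈ B, u i o)
    {o : O} (ho : o ∈ A \ B) : ∃ t ∈ B \ A, u i o ≤ u i t := by
  by_contra h
  push_neg at h
  have h1 : ∑ t ∈ B \ A, u i t ≤ ∑ t ∈ univ.filter (fun t => u i t < u i o), u i t := by
    refine sum_le_sum_of_subset_of_nonneg ?_ (fun t _ _ => (hpos i t).le)
    intro t ht
    exact mem_filter.mpr ⟨mem_univ _, h t ht⟩
  have h2 : u i o ≤ ∑ t ∈ A \ B, u i t :=
    single_le_sum (fun t _ => (hpos i t).le) ho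
  have h3 : ∑ t ∈ A \ B, u i t ≤ ∑ t ∈ B \ A, u i t := by
    have hA := sum_filter_add_sum_filter_not A (fun t => t ∈ B) (u i)
    have hB := sum_filter_add_sum_filter_not B (fun t => t ∈ A) (u i)
    have e1 : A.filter (fun t => t ∈ B) = B.filter (fun t => t ∈ A) := by
      ext x; simp [mem_filter, and_comm]
    have e2 : A.filter (fun t => t ∉ B) = A \ B := (sdiff_eq_filter A B).symm
    have e3 : B.filter (fun t => t ∉ A) = B \ A := (sdiff_eq_filter B A).symm
    rw [e1, e2] at hA
    rw [e3] at hB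
    linarith
  have := hlex i o
  linarith

lemma improvement_cycle {N O : Type*} [Fintype N] [Fintype O]
    [DecidableEq N] [DecidableEq O]
    (u : N → O → ℝ) (hpos : ∀ i o, 0 < u i o) (hlex : Lexicographic u)
    (p : N → Finset O) (hp : IsPartition p) :
    ∀ n : ℕ, ∀ q : N → Finset O, IsPartition q → Dominates u q p →
      (Finset.filter (fun o => ∀ i, o ∈ p i → o ∉ q i) univ).card ≤ n →
      ∃ (k : ℕ) (_ : 2 ≤ k) (c : Fin k → O), Function.Injective c ∧
        (∀ l : Fin k, ∀ i : N, c l ∈ p i →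
          u i (c l) ≤ u i (c (nextFin (Nat.lt_of_lt_of_le Nat.two_pos ‹2 ≤ k›) l))) ∧
        (∃ l : Fin k, ∃ i : N, c l ∈ p i ∧
          u i (c l) < u i (c (nextFin (Nat.lt_of_lt_of_le Nat.two_pos ‹2 ≤ k›) l))) := by
  classical
  -- owner function
  set w : O → N := fun o => (hp o).choose with hwdef
  have hw : ∀ o, o ∈ p (w o) := fun o => (hp o).choose_spec.1
  have hwu : ∀ o i, o ∈ p i → i = w o := fun o i hi => (hp o).choose_spec.2 i hi
  -- nonemptiness of the moved set
  have hMne : ∀ q : N → Finset O, IsPartition q → Dominates u q p →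
      (Finset.filter (fun o => ∀ i, o ∈ p i → o ∉ q i) univ).Nonempty := by
    intro q hq hdom
    rw [nonempty_iff_ne_empty]
    intro hcon
    have hall : ∀ o : O, ∃ i, o ∈ p i ∧ o ∈ q i := by
      intro o
      by_contra hno
      push_neg at hno
      have hmm : o ∈ Finset.filter (fun o => ∀ i, o ∈ p i → o ∉ q i) univ :=
        mem_filter.mpr ⟨mem_univ _, fun i hi => hno i hi⟩
      rw [hcon] at hmm
      exact notMem_empty _ hmm
    have hqp : ∀ i, q i = p i := by
      intro i
      ext o
      obtain ⟨j, hj1, hj2⟩ := hall o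
      constructor
      · intro hoq
        obtain ⟨j', -, hju⟩ := hq o
        have : i = j := (hju i hoq).trans (hju j hj2).symm
        exact this ▸ hj1
      · intro hop
        obtain ⟨j', -, hju⟩ := hp o
        have : i = j := (hju i hop).trans (hju j hj1).symm
        exact this ▸ hj2
    obtain ⟨i0, hi0⟩ := hdom.2
    rw [hqp i0] at hi0
    exact lt_irrefl _ hi0
  intro n
  induction n with
  | zero =>
    intro q hq hdom hcard
    obtain ⟨x, hx⟩ := hMne q hq hdom
    rw [card_eq_zero.mp (Nat.le_zero.mp hcard)] at hx
    exact absurd hx (notMem_empty x)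
  | succ n ih =>
    intro q hq hdom hcard
    set M := (Finset.filter (fun o => ∀ i, o ∈ p i → o ∉ q i) univ) with hMdef
    have hMmem : ∀ o, o ∈ M ↔ o ∉ q (w o) := by
      intro o
      rw [hMdef, mem_filter]
      constructor
      · rintro ⟨-, h⟩; exact h (w o) (hw o)
      · intro h
        exact ⟨mem_univ _, fun i hi => (hwu o i hi) ▸ h⟩
    -- the exchange step function
    have hstep : ∀ o ∈ M, ∃ t, t ∈ q (w o) \ p (w o) ∧ u (w o) o ≤ u (w o) t ∧
        ∀ s ∈ q (w o) \ p (w o), u (w o) s ≤ u (w o) t := by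
      intro o ho
      have ho' : o ∈ p (w o) \ q (w o) := mem_sdiff.mpr ⟨hw o, (hMmem o).mp ho⟩
      obtain ⟨t0, ht0, ht0le⟩ := lex_exists_better u hpos hlex (w o) (p (w o)) (q (w o))
        (hdom.1 (w o)) ho'
      obtain ⟨t, ht, htmax⟩ := exists_max_image (q (w o) \ p (w o)) (u (w o)) ⟨t0, ht0⟩
      exact ⟨t, ht, ht0le.trans (htmax t0 ht0), htmax⟩
    set F : O → O := fun o => if h : o ∈ M then (hstep o h).choose else o with hFdef
    have hF : ∀ o (h : o ∈ M), F o ∈ q (w o) \ p (w o) ∧ u (w o) o ≤ u (w o) (F o) ∧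
        ∀ s ∈ q (w o) \ p (w o), u (w o) s ≤ u (w o) (F o) := by
      intro o h
      simp only [hFdef, dif_pos h]
      exact (hstep o h).choose_spec
    have hFM : ∀ o ∈ M, F o ∈ M := by
      intro o ho
      obtain ⟨hf1, -, -⟩ := hF o ho
      rw [mem_sdiff] at hf1
      rw [hMmem]
      intro hcon
      obtain ⟨j, hj, hju⟩ := hq (F o)
      have e1 : w (F o) = j := hju _ hcon
      have e2 : w o = j := hju _ hf1.1
      exact hf1.2 (by rw [e2, ← e1]; exact hw (F o))
    have hFne : ∀ o ∈ M, F o ≠ o := by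
      intro o ho hcon
      obtain ⟨hf1, -, -⟩ := hF o ho
      rw [hcon] at hf1
      exact (mem_sdiff.mp hf1).2 (hw o)
    obtain ⟨x0, hx0⟩ := hMne q hq hdom
    have hx0M : x0 ∈ M := hx0
    have horbit : ∀ m : ℕ, F^[m] x0 ∈ M := by
      intro m
      induction m with
      | zero => exact hx0M
      | succ m ihm => rw [Function.iterate_succ_apply']; exact hFM _ ihm
    obtain ⟨a, b, hab, heq⟩ : ∃ a b : ℕ, a < b ∧ F^[a] x0 = F^[b] x0 := by
      obtain ⟨a, b, hne, h⟩ := Finite.exists_ne_map_eq_of_infinite (fun m : ℕ => F^[m] x0)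
      rcases hne.lt_or_gt with h' | h'
      · exact ⟨a, b, h', h⟩
      · exact ⟨b, a, h', h.symm⟩
    set x := F^[a] x0 with hxdef
    have hper : Function.IsPeriodicPt F (b - a) x := by
      show F^[b-a] x = x
      rw [hxdef, ← Function.iterate_add_apply]
      have hba : b - a + a = b := by omega
      rw [hba, ← heq]
    set m := Function.minimalPeriod F x with hmdef
    have hm0 : 0 < m := hper.minimalPeriod_pos (by omega)
    have hxM : ∀ l : ℕ, F^[l] x ∈ M := by
      intro l
      rw [hxdef, ← Function.iterate_add_apply]
      exact horbit _
    have hm2 : 2 ≤ m := by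
      by_contra hcon
      have hm1 : m = 1 := by omega
      have hFx : F x = x := by
        have hh := Function.isPeriodicPt_minimalPeriod F x
        rw [← hmdef, hm1] at hh
        exact hh
      exact hFne x (hxM 0) hFx
    set c : Fin m → O := fun l => F^[l.1] x with hcdef
    have hcinj : Function.Injective c := by
      intro l1 l2 h
      refine Fin.ext ?_
      have := Function.iterate_injOn_Iio_minimalPeriod (f := F) (x := x)
      exact this (Set.mem_Iio.mpr (hmdef ▸ l1.2)) (Set.mem_Iio.mpr (hmdef ▸ l2.2)) h
    have hcM : ∀ l : Fin m, c l ∈ M := fun l => hxM l.1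
    have hcnext : ∀ l : Fin m, c (nextFin (by omega : 0 < m) l) = F (c l) := by
      intro l
      show F^[(l.1 + 1) % m] x = F (F^[l.1] x)
      have h2 : F (F^[l.1] x) = F^[l.1 + 1] x := (Function.iterate_succ_apply' F _ x).symm
      rw [h2]
      exact Function.iterate_mod_minimalPeriod_eq
    have hweak : ∀ (l : Fin m) (i : N), c l ∈ p i →
        u i (c l) ≤ u i (c (nextFin (by omega : 0 < m) l)) := by
      intro l i hi
      have hiw : i = w (c l) := hwu _ _ hi
      rw [hcnext l, hiw]
      exact (hF (c l) (hcM l)).2.1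
    by_cases hstrict : ∃ l : Fin m, u (w (c l)) (c l) < u (w (c l)) (F (c l))
    · obtain ⟨l, hl⟩ := hstrict
      exact ⟨m, hm2, c, hcinj, hweak, ⟨l, w (c l), hw (c l), by rw [hcnext l]; exact hl⟩⟩
    push_neg at hstrict
    have htie : ∀ l : Fin m, u (w (c l)) (c l) = u (w (c l)) (F (c l)) :=
      fun l => le_antisymm ((hF (c l) (hcM l)).2.1) (hstrict l)
    -- cancel the all-tie cycle
    set Cy : Finset O := image c univ with hCydef
    set q' : N → Finset O := fun j => (q j \ Cy) ∪ (p j ∩ Cy) with hq'def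
    have hq'mem : ∀ j o, o ∈ q' j ↔ (o ∈ q j ∧ o ∉ Cy) ∨ (o ∈ p j ∧ o ∈ Cy) := by
      intro j o
      simp only [hq'def, mem_union, mem_sdiff, mem_inter]
    have hq'part : IsPartition q' := by
      intro o
      by_cases ho : o ∈ Cy
      · obtain ⟨i0, hi0, hi0u⟩ := hp o
        refine ⟨i0, (hq'mem i0 o).mpr (Or.inr ⟨hi0, ho⟩), ?_⟩
        intro i hi
        rcases (hq'mem i o).mp hi with ⟨-, hno⟩ | ⟨hpi, -⟩
        · exact absurd ho hno
        · exact hi0u i hpi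
      · obtain ⟨i0, hi0, hi0u⟩ := hq o
        refine ⟨i0, (hq'mem i0 o).mpr (Or.inl ⟨hi0, ho⟩), ?_⟩
        intro i hi
        rcases (hq'mem i o).mp hi with ⟨hqi, -⟩ | ⟨-, hC⟩
        · exact hi0u i hqi
        · exact absurd hC ho
    -- the q'-sums equal the q-sums
    have hq'sum : ∀ j, ∑ o ∈ q' j, u j o = ∑ o ∈ q j, u j o := by
      intro j
      set Lp : Finset (Fin m) := univ.filter (fun l => c l ∈ p j) with hLpdef
      have hpC : p j ∩ Cy = image c Lp := by
        ext y
        simp only [mem_inter, hCydef, mem_image, hLpdef, mem_filter, mem_univ, true_and]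
        constructor
        · rintro ⟨hy, l, rfl⟩
          exact ⟨l, hy, rfl⟩
        · rintro ⟨l, hl, rfl⟩
          exact ⟨hl, l, rfl⟩
      have hqC : q j ∩ Cy = image (fun l => c (nextFin (by omega : 0 < m) l)) Lp := by
        ext y
        simp only [mem_inter, hCydef, mem_image, hLpdef, mem_filter, mem_univ, true_and]
        constructor
        · rintro ⟨hy, l', rfl⟩
          obtain ⟨l, rfl⟩ := nextFin_surjective (by omega : 0 < m) l'
          have hmemq : c (nextFin (by omega : 0 < m) l) ∈ q (w (c l)) := by
            rw [hcnext l]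
            exact (mem_sdiff.mp (hF (c l) (hcM l)).1).1
          obtain ⟨j', -, hju⟩ := hq (c (nextFin (by omega : 0 < m) l))
          have hjw : j = w (c l) := (hju j hy).trans (hju _ hmemq).symm
          exact ⟨l, hjw ▸ hw (c l), rfl⟩
        · rintro ⟨l, hl, rfl⟩
          have hjw : j = w (c l) := hwu _ _ hl
          have hmemq : c (nextFin (by omega : 0 < m) l) ∈ q (w (c l)) := by
            rw [hcnext l]
            exact (mem_sdiff.mp (hF (c l) (hcM l)).1).1
          exact ⟨hjw ▸ hmemq, nextFin (by omega : 0 < m) l, rfl⟩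
      have hdisj : Disjoint (q j \ Cy) (p j ∩ Cy) :=
        disjoint_left.mpr (fun y hy hy' => (mem_sdiff.mp hy).2 (mem_inter.mp hy').2)
      have hsum1 : ∑ o ∈ q' j, u j o = ∑ o ∈ q j \ Cy, u j o + ∑ o ∈ p j ∩ Cy, u j o := by
        rw [hq'def]
        exact sum_union hdisj
      have hsum2 : ∑ o ∈ q j, u j o = ∑ o ∈ q j \ Cy, u j o + ∑ o ∈ q j ∩ Cy, u j o := by
        have h := sum_filter_add_sum_filter_not (q j) (fun o => o ∈ Cy) (u j)
        rw [← sdiff_eq_filter, filter_mem_eq_inter] at h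
        linarith
      have hsum3 : ∑ o ∈ p j ∩ Cy, u j o = ∑ o ∈ q j ∩ Cy, u j o := by
        rw [hpC, hqC, sum_image (fun a _ b _ h => hcinj h),
          sum_image (fun a _ b _ h => nextFin_injective _ (hcinj h))]
        refine sum_congr rfl ?_
        intro l hl
        have hjw : j = w (c l) := hwu _ _ ((mem_filter.mp hl).2)
        rw [hjw, hcnext l]
        exact htie l
      rw [hsum1, hsum2, hsum3]
    have hdom' : Dominates u q' p := by
      obtain ⟨i0, hi0⟩ := hdom.2
      exact ⟨fun i => (hq'sum i).symm ▸ hdom.1 i, ⟨i0, (hq'sum i0).symm ▸ hi0⟩⟩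
    -- the moved set shrinks
    have hsub : (Finset.filter (fun o => ∀ i, o ∈ p i → o ∉ q' i) univ) ⊆ M \ Cy := by
      intro o ho
      rw [mem_filter] at ho
      have ho' := ho.2 (w o) (hw o)
      by_cases hoC : o ∈ Cy
      · exact absurd ((hq'mem (w o) o).mpr (Or.inr ⟨hw o, hoC⟩)) ho'
      · refine mem_sdiff.mpr ⟨?_, hoC⟩
        rw [hMmem]
        intro hq_mem
        exact ho' ((hq'mem (w o) o).mpr (Or.inl ⟨hq_mem, hoC⟩))
    have hCyM : Cy ⊆ M := by
      intro y hy
      obtain ⟨l, -, rfl⟩ := mem_image.mp hy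
      exact hcM l
    have hCyne : 1 ≤ Cy.card := by
      have : (⟨0, by omega⟩ : Fin m) ∈ univ := mem_univ _
      have hne : Cy.Nonempty := ⟨c ⟨0, by omega⟩, mem_image.mpr ⟨_, this, rfl⟩⟩
      exact card_pos.mpr hne
    have hcard' : (Finset.filter (fun o => ∀ i, o ∈ p i → o ∉ q' i) univ).card ≤ n := by
      have h1 := card_le_card hsub
      have h2 : (M \ Cy).card = M.card - Cy.card := card_sdiff_of_subset hCyM
      have h3 : M.card ≤ n + 1 := hcard
      omega
    exact ih q' hq'part hdom' hcard'

/-- Under lexicographic utilities, p is Pareto optimal iff the exchange graph G(p)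
has no cycle containing a strict-preference edge. -/
theorem lexicographic_pareto_optimal_iff_no_strict_cycle
    {N O : Type*} [Fintype N] [Fintype O]
    (u : N → O → ℝ) (hpos : ∀ i o, 0 < u i o) (hlex : Lexicographic u)
    (p : N → Finset O) (hp : IsPartition p) :
    ParetoOptimal u p ↔
      ¬ ∃ (k : ℕ) (hk : 2 ≤ k) (c : Fin k → O), Function.Injective c ∧
        (∀ l : Fin k, ∀ i : N, c l ∈ p i →
          u i (c l) ≤ u i (c (nextFin (by omega) l))) ∧
        (∃ l : Fin k, ∃ i : N, c l ∈ p i ∧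
          u i (c l) < u i (c (nextFin (by omega) l))) := by
  classical
  constructor
  · intro hPO
    rintro ⟨k, hk, c, hcinj, hweak, hstrict⟩
    exact hPO (cycle_improvement u p hp hk c hcinj hweak hstrict)
  · intro hnc
    rintro ⟨q, hq, hdom⟩
    exact hnc (improvement_cycle u hpos hlex p hp _ q hq hdom le_rfl)
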